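/- Suppose ε < 0.11, |ψ⁰⟩_{RMM'} ∈ S₀^ε and |ψ¹⟩_{RMM'} ∈ S₁^ε (as in the f-BB84 analysis). Let Δ be the trace distance between the states obtained from ψ⁰ and ψ¹ by measuring R in the Hadamard basis. Then 1 - 2h(ε) ≤ 4Δ + (1+Δ)·h(Δ/(1+Δ)); in particular Δ > 0 and hence ψ⁰ ≠ ψ¹. -/

import Mathlib

open scoped Classical ComplexOrder

noncomputable def binEnt (x : ℝ) : ℝ := -x * Real.logb 2 x - (1 - x) * Real.logb 2 (1 - x)

/-- von Neumann entropy (base 2) of a matrix, via eigenvalues (0 if not Hermitian). -/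
noncomputable def vnEnt {d : Type*} [Fintype d] [DecidableEq d] (ρ : Matrix d d ℂ) : ℝ :=
  if h : ρ.IsHermitian then ∑ i, -(h.eigenvalues i) * Real.logb 2 (h.eigenvalues i) else 0

/-- Trace norm of a Hermitian matrix (0 if not Hermitian). -/
noncomputable def traceNorm {d : Type*} [Fintype d] [DecidableEq d] (A : Matrix d d ℂ) : ℝ :=
  if h : A.IsHermitian then ∑ i, |h.eigenvalues i| else 0

noncomputable def fidelity {d : Type*} [Fintype d] [DecidableEq d] (ρ σ : Matrix d d ℂ) : ℝ :=
  if hσ : σ.PosSemidef then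
    if h : ((hσ.1.eigenvectorUnitary.1 * Matrix.diagonal (((↑) : ℝ → ℂ) ∘ (√·) ∘ hσ.1.eigenvalues) *
        (star hσ.1.eigenvectorUnitary : Matrix d d ℂ)) * ρ *
        (hσ.1.eigenvectorUnitary.1 * Matrix.diagonal (((↑) : ℝ → ℂ) ∘ (√·) ∘ hσ.1.eigenvalues) *
        (star hσ.1.eigenvectorUnitary : Matrix d d ℂ))).IsHermitian then ∑ i, Real.sqrt (h.eigenvalues i) else 0
  else 0

noncomputable def pdist {d : Type*} [Fintype d] [DecidableEq d] (ρ σ : Matrix d d ℂ) : ℝ :=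
  Real.sqrt (1 - (fidelity ρ σ) ^ 2)

def IsState {d : Type*} [Fintype d] [DecidableEq d] (ρ : Matrix d d ℂ) : Prop :=
  ρ.PosSemidef ∧ ρ.trace = 1

/-- partial trace over the second tensor factor -/
noncomputable def ptraceR {a b : Type*} [Fintype b] (ρ : Matrix (a × b) (a × b) ℂ) : Matrix a a ℂ :=
  fun i j => ∑ k, ρ (i, k) (j, k)

/-- partial trace over the first tensor factor -/
noncomputable def ptraceL {a b : Type*} [Fintype a] (ρ : Matrix (a × b) (a × b) ℂ) : Matrix b b ℂ :=
  fun i j => ∑ k, ρ (k, i) (k, j)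

/-- conditional von Neumann entropy H(A|B) of a state on A × B -/
noncomputable def condEnt {a b : Type*} [Fintype a] [Fintype b] [DecidableEq a] [DecidableEq b]
    (ρ : Matrix (a × b) (a × b) ℂ) : ℝ := vnEnt ρ - vnEnt (ptraceL ρ)

/-- computational-basis projector on a qubit -/
noncomputable def Pc (b : Fin 2) : Matrix (Fin 2) (Fin 2) ℂ := fun i j => if i = b ∧ j = b then 1 else 0

/-- Hadamard-basis projector on a qubit -/
noncomputable def Ph (b : Fin 2) : Matrix (Fin 2) (Fin 2) ℂ :=
  fun i j => (1 / 2 : ℂ) * (-1) ^ ((i : ℕ) * (b : ℕ)) * (-1) ^ ((b : ℕ) * (j : ℕ))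

/-- measure the first (qubit) factor with rank-one projectors `P`, storing the outcome
classically in its place -/
noncomputable def cqMeasure {m : Type*} [Fintype m] (P : Fin 2 → Matrix (Fin 2) (Fin 2) ℂ)
    (ρ : Matrix (Fin 2 × m) (Fin 2 × m) ℂ) : Matrix (Fin 2 × m) (Fin 2 × m) ℂ :=
  fun zi z'j => if zi.1 = z'j.1 then ∑ r, ∑ t, (P zi.1) r t * ρ (t, zi.2) (r, z'j.2) else 0

/-- outer product |ψ⟩⟨ψ| of a vector -/
noncomputable def outer {d : Type*} (ψ : d → ℂ) : Matrix d d ℂ := fun i j => ψ i * (starRingEnd ℂ) (ψ j)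

/-- trace out the third subsystem -/
noncomputable def trThird {dE dF : ℕ} (ρ : Matrix (Fin 2 × Fin dE × Fin dF) (Fin 2 × Fin dE × Fin dF) ℂ) :
    Matrix (Fin 2 × Fin dE) (Fin 2 × Fin dE) ℂ :=
  fun p q => ∑ f, ρ (p.1, p.2, f) (q.1, q.2, f)

/-- trace out the second subsystem -/
noncomputable def trSecond {dE dF : ℕ} (ρ : Matrix (Fin 2 × Fin dE × Fin dF) (Fin 2 × Fin dE × Fin dF) ℂ) :
    Matrix (Fin 2 × Fin dF) (Fin 2 × Fin dF) ℂ :=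
  fun p q => ∑ e, ρ (p.1, e, p.2) (q.1, e, q.2)

open Kronecker in
/-- probability that local measurements `{O b}` (acting on `M ⊗ M'`) reproduce the outcome of
the rank-one measurement `{R b}` on the qubit `R` of the pure state `ψ` on `R ⊗ M ⊗ M'`. -/
noncomputable def guessProb {dM dM' : ℕ} (R : Fin 2 → Matrix (Fin 2) (Fin 2) ℂ)
    (O : Fin 2 → Matrix (Fin dM × Fin dM') (Fin dM × Fin dM') ℂ)
    (ψ : Fin 2 × Fin dM × Fin dM' → ℂ) : ℝ :=
  (∑ b, ((R b ⊗ₖ O b) * outer ψ).trace).re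

open Kronecker in
/-- the set of normalized pure states on `R ⊗ M ⊗ M'` for which a measurement on `M` and a
measurement on `M'` each predict, with probability at least `1 - ε`, the outcome of measuring
the qubit `R` with the rank-one basis measurement `{R b}`. -/
def predSet {dM dM' : ℕ} (R : Fin 2 → Matrix (Fin 2) (Fin 2) ℂ) (ε : ℝ) :
    Set (Fin 2 × Fin dM × Fin dM' → ℂ) :=
  {ψ | (∑ p, ‖ψ p‖ ^ 2 = 1) ∧
    (∃ Λ : Fin 2 → Matrix (Fin dM) (Fin dM) ℂ, (∀ b, (Λ b).PosSemidef) ∧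
      Λ 0 + Λ 1 = 1 ∧ 1 - ε ≤ guessProb R (fun b => Λ b ⊗ₖ (1 : Matrix (Fin dM') (Fin dM') ℂ)) ψ) ∧
    (∃ Λ' : Fin 2 → Matrix (Fin dM') (Fin dM') ℂ, (∀ b, (Λ' b).PosSemidef) ∧
      Λ' 0 + Λ' 1 = 1 ∧ 1 - ε ≤ guessProb R (fun b => (1 : Matrix (Fin dM) (Fin dM) ℂ) ⊗ₖ Λ' b) ψ)}

section AuxLemmas

open Matrix
open scoped Kronecker

/-! ### Generic linear algebra lemmas -/

lemma trace_mul_outer {d : Type*} [Fintype d] (X : Matrix d d ℂ) (ψ : d → ℂ) :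
    (X * outer ψ).trace = star ψ ⬝ᵥ (X *ᵥ ψ) := by
  simp only [Matrix.trace, Matrix.diag, Matrix.mul_apply, outer, dotProduct, Matrix.mulVec,
    Pi.star_apply, Finset.mul_sum]
  refine Finset.sum_congr rfl fun i _ => Finset.sum_congr rfl fun j _ => ?_
  simp [RCLike.star_def]; ring

lemma kron_conjT {m n : Type*} (A : Matrix m m ℂ) (B : Matrix n n ℂ) : (A ⊗ₖ B)ᴴ = Aᴴ ⊗ₖ Bᴴ := by
  ext ⟨i,j⟩ ⟨k,l⟩
  simp [Matrix.conjTranspose_apply, Matrix.kroneckerMap_apply, mul_comm]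

lemma kron_psd {m n : Type*} [Fintype m] [Fintype n] [DecidableEq m] [DecidableEq n]
    {A : Matrix m m ℂ} {B : Matrix n n ℂ} (hA : A.PosSemidef) (hB : B.PosSemidef) :
    (A ⊗ₖ B).PosSemidef := by
  exact hA.kronecker hB

lemma psd_cs {d : Type*} [Fintype d] {T : Matrix d d ℂ} (hT : T.PosSemidef) (x y : d → ℂ) :
    ‖star x ⬝ᵥ (T *ᵥ y)‖ ≤
      Real.sqrt ((star x ⬝ᵥ (T *ᵥ x)).re) * Real.sqrt ((star y ⬝ᵥ (T *ᵥ y)).re) := by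
  obtain ⟨B, rfl⟩ : ∃ B : Matrix d d ℂ, T = Bᴴ * B := by
    classical
    open scoped MatrixOrder in
    refine ⟨CFC.sqrt T, ?_⟩
    open scoped MatrixOrder in
    rw [← Matrix.star_eq_conjTranspose, (CFC.sqrt_nonneg T).isSelfAdjoint.star_eq,
      CFC.sqrt_mul_sqrt_self T hT.nonneg]
  have key : ∀ u v : d → ℂ, star u ⬝ᵥ ((Bᴴ * B) *ᵥ v) = star (B *ᵥ u) ⬝ᵥ (B *ᵥ v) := by
    intro u v
    rw [Matrix.star_mulVec, ← Matrix.mulVec_mulVec, Matrix.dotProduct_mulVec]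
  have h1 : ∀ u v : d → ℂ, star u ⬝ᵥ v
      = (inner ℂ (WithLp.toLp 2 u) (WithLp.toLp 2 v) : ℂ) := fun u v => by
    rw [EuclideanSpace.inner_toLp_toLp, dotProduct_comm]
  have h2 : ∀ z : ℂ, z.re = RCLike.re z := fun _ => rfl
  rw [key x y, key x x, key y y, h1, h1, h1, h2, h2, ← norm_eq_sqrt_re_inner, ← norm_eq_sqrt_re_inner]
  exact norm_inner_le_norm _ _

lemma diag_entry_quadform {d : Type*} [Fintype d] (W D : Matrix d d ℂ) (i : d) :
    (star W * D * W) i i = star (fun k => W k i) ⬝ᵥ (D *ᵥ fun k => W k i) := by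
  simp only [Matrix.mul_apply, Matrix.star_apply, dotProduct, Matrix.mulVec, Pi.star_apply,
    Finset.sum_mul, Finset.mul_sum]
  rw [Finset.sum_comm]
  refine Finset.sum_congr rfl fun a _ => Finset.sum_congr rfl fun b _ => ?_
  ring

lemma tn_bound {d : Type*} [Fintype d] [DecidableEq d] {A D : Matrix d d ℂ} (hA : A.IsHermitian)
    (htr : A.trace = 0) (hD : D.PosSemidef) (hD' : (1 - D).PosSemidef) :
    ((D * A).trace).re ≤ (1/2) * traceNorm A := by
  set U : Matrix d d ℂ := (Matrix.IsHermitian.eigenvectorUnitary hA : Matrix d d ℂ) with hU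
  set μ := hA.eigenvalues with hμ
  have hUU : star U * U = 1 := Unitary.coe_star_mul_self _
  have hA' : A = U * Matrix.diagonal (RCLike.ofReal ∘ μ) * star U := hA.spectral_theorem
  have key : ∀ E : Matrix d d ℂ,
      (E * A).trace = ∑ i, (star U * E * U) i i * (μ i : ℂ) := by
    intro E
    conv_lhs => rw [hA']
    have h2 : E * (U * Matrix.diagonal (RCLike.ofReal ∘ μ) * star U)
        = (E * U * Matrix.diagonal (RCLike.ofReal ∘ μ)) * star U := by
      simp only [Matrix.mul_assoc]
    have h3 : star U * (E * U * Matrix.diagonal (RCLike.ofReal ∘ μ))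
        = (star U * E * U) * Matrix.diagonal (RCLike.ofReal ∘ μ) := by
      simp only [Matrix.mul_assoc]
    rw [h2, Matrix.trace_mul_comm, h3]
    simp [Matrix.trace, Matrix.diag, Matrix.mul_diagonal, Function.comp]
  have hsum : ∑ i, μ i = 0 := by
    have h1 : A.trace = ∑ i, (μ i : ℂ) := by
      have h := key 1
      simp only [Matrix.mul_one, Matrix.one_mul] at h
      rw [hUU] at h
      simpa [Matrix.one_apply] using h
    rw [htr] at h1
    have := h1.symm
    rw [← Complex.ofReal_sum] at this
    exact_mod_cast this
  have hcol : ∀ i, 0 ≤ ((star U * D * U) i i).re ∧ ((star U * D * U) i i).re ≤ 1 := by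
    intro i
    set u : d → ℂ := fun k => U k i with hu
    have e1 : (star U * D * U) i i = star u ⬝ᵥ (D *ᵥ u) := diag_entry_quadform U D i
    have e2 : (star U * U) i i = star u ⬝ᵥ (1 *ᵥ u) := by
      have := diag_entry_quadform U 1 i
      simpa using this
    have eu : star u ⬝ᵥ u = 1 := by
      have : (star U * U) i i = (1 : Matrix d d ℂ) i i := by rw [hUU]
      rw [e2] at this
      simpa using this
    constructor
    · rw [e1]; exact hD.re_dotProduct_nonneg u
    · have h0 := hD'.re_dotProduct_nonneg u
      have h4 : star u ⬝ᵥ ((1 - D) *ᵥ u) = star u ⬝ᵥ u - star u ⬝ᵥ (D *ᵥ u) := by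
        rw [Matrix.sub_mulVec, dotProduct_sub]
        simp
      rw [h4, eu] at h0
      have h5 : RCLike.re ((1 : ℂ) - star u ⬝ᵥ (D *ᵥ u)) = 1 - (star u ⬝ᵥ (D *ᵥ u)).re := by
        simp [RCLike.re]
      rw [h5] at h0
      rw [e1]; linarith
  rw [key D]
  have hre : (∑ i, (star U * D * U) i i * (μ i : ℂ)).re
      = ∑ i, ((star U * D * U) i i).re * μ i := by
    rw [Complex.re_sum]
    refine Finset.sum_congr rfl fun i _ => ?_
    simp [Complex.mul_re]
  rw [hre]
  have htn : traceNorm A = ∑ i, |μ i| := by rw [traceNorm, dif_pos hA]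
  rw [htn]
  have step : ∀ i ∈ Finset.univ, ((star U * D * U) i i).re * μ i ≤ (|μ i| + μ i) / 2 := by
    intro i _
    obtain ⟨h0, h1⟩ := hcol i
    rcases le_or_gt 0 (μ i) with h | h
    · rw [abs_of_nonneg h]; nlinarith
    · rw [abs_of_neg h]; nlinarith
  calc ∑ i, ((star U * D * U) i i).re * μ i ≤ ∑ i, (|μ i| + μ i) / 2 :=
        Finset.sum_le_sum step
    _ = (1/2) * ∑ i, |μ i| := by
        rw [← Finset.sum_div, Finset.sum_add_distrib, hsum, add_zero]
        ring

lemma traceNorm_zero {d : Type*} [Fintype d] [DecidableEq d] :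
    traceNorm (0 : Matrix d d ℂ) = 0 := by
  have h : (0 : Matrix d d ℂ).IsHermitian := by simp [Matrix.IsHermitian]
  rw [traceNorm, dif_pos h]
  refine Finset.sum_eq_zero fun i _ => ?_
  have := h.eigenvalues_eq i
  simp only [Matrix.zero_mulVec, dotProduct_zero] at this
  simp [this]

/-! ### Qubit block lemmas -/

section Blocks

variable {m : Type*} [Fintype m]

lemma dp_split (ψ v : Fin 2 × m → ℂ) :
    ψ ⬝ᵥ v = (fun i => ψ (0,i)) ⬝ᵥ (fun i => v (0,i)) + (fun i => ψ (1,i)) ⬝ᵥ (fun i => v (1,i)) := by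
  simp [dotProduct, Fintype.sum_prod_type, Fin.sum_univ_two]

lemma kron2_mulVec (P : Matrix (Fin 2) (Fin 2) ℂ) (O : Matrix m m ℂ) (ψ : Fin 2 × m → ℂ)
    (r : Fin 2) (i : m) :
    ((P ⊗ₖ O) *ᵥ ψ) (r,i)
      = P r 0 * (O *ᵥ fun j => ψ (0,j)) i + P r 1 * (O *ᵥ fun j => ψ (1,j)) i := by
  simp only [Matrix.mulVec, dotProduct, Fintype.sum_prod_type, Fin.sum_univ_two,
    Matrix.kroneckerMap_apply, Finset.mul_sum]
  congr 1 <;> exact Finset.sum_congr rfl fun j _ => by ring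

lemma quad_kron (P : Matrix (Fin 2) (Fin 2) ℂ) (O : Matrix m m ℂ) (ψ : Fin 2 × m → ℂ) :
    star ψ ⬝ᵥ ((P ⊗ₖ O) *ᵥ ψ)
      = P 0 0 * ((star fun j => ψ (0,j)) ⬝ᵥ (O *ᵥ fun j => ψ (0,j)))
      + P 0 1 * ((star fun j => ψ (0,j)) ⬝ᵥ (O *ᵥ fun j => ψ (1,j)))
      + P 1 0 * ((star fun j => ψ (1,j)) ⬝ᵥ (O *ᵥ fun j => ψ (0,j)))
      + P 1 1 * ((star fun j => ψ (1,j)) ⬝ᵥ (O *ᵥ fun j => ψ (1,j))) := by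
  rw [dp_split]
  simp only [kron2_mulVec, dotProduct, Pi.star_apply, Finset.mul_sum]
  rw [← Finset.sum_add_distrib, ← Finset.sum_add_distrib, ← Finset.sum_add_distrib]
  rw [← Finset.sum_add_distrib]
  refine Finset.sum_congr rfl fun j _ => ?_
  ring

lemma quadPc (b : Fin 2) (O : Matrix m m ℂ) (ψ : Fin 2 × m → ℂ) :
    star ψ ⬝ᵥ ((Pc b ⊗ₖ O) *ᵥ ψ)
      = (star fun j => ψ (b,j)) ⬝ᵥ (O *ᵥ fun j => ψ (b,j)) := by
  rw [quad_kron]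
  fin_cases b <;> simp [Pc]

lemma quadPh (z : Fin 2) (O : Matrix m m ℂ) (ψ : Fin 2 × m → ℂ) :
    star ψ ⬝ᵥ ((Ph z ⊗ₖ O) *ᵥ ψ)
      = (1/2) * ((star fun j => ψ (0,j) + (-1)^(z:ℕ) * ψ (1,j))
          ⬝ᵥ (O *ᵥ fun j => ψ (0,j) + (-1)^(z:ℕ) * ψ (1,j))) := by
  rw [quad_kron]
  have hsmul : (fun j => ψ (0,j) + (-1:ℂ)^(z:ℕ) * ψ (1,j))
      = (fun j => ψ (0,j)) + ((-1:ℂ)^(z:ℕ)) • (fun j => ψ (1,j)) := rfl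
  rw [hsmul, star_add, star_smul]
  simp only [Matrix.mulVec_add, Matrix.mulVec_smul, dotProduct_add, add_dotProduct,
    dotProduct_smul, smul_dotProduct]
  have hc : star ((-1:ℂ)^(z:ℕ)) = (-1:ℂ)^(z:ℕ) := by
    simp [star_pow]
  rw [hc]
  fin_cases z <;> · simp [Ph, smul_eq_mul]; ring

/-- the Hadamard-component vector `ψ₀ ± ψ₁` -/
noncomputable def hadComp (z : Fin 2) (ψ : Fin 2 × m → ℂ) : m → ℂ :=
  fun j => ψ (0,j) + (-1:ℂ)^(z:ℕ) * ψ (1,j)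

lemma cq_apply (ψ : Fin 2 × m → ℂ) (z z' : Fin 2) (i j : m) :
    cqMeasure Ph (outer ψ) (z,i) (z',j)
      = if z = z' then
          (1/2) * (hadComp z ψ i * (starRingEnd ℂ) (hadComp z ψ j)) else 0 := by
  show (if z = z' then ∑ r, ∑ t, Ph z r t * outer ψ (t, i) (r, j) else 0) = _
  rcases eq_or_ne z z' with h | h
  · rw [if_pos h, if_pos h]
    simp only [Fin.sum_univ_two, outer, hadComp]
    have hc : ∀ w : ℂ, (starRingEnd ℂ) ((-1:ℂ)^(z:ℕ) * w)
        = (-1:ℂ)^(z:ℕ) * (starRingEnd ℂ) w := by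
      intro w; simp only [_root_.map_mul, map_pow, map_neg, RingHom.map_one]
    fin_cases z <;> · simp [Ph, map_add, hc]; ring
  · rw [if_neg h, if_neg h]

/-- block-diagonal matrix on `Fin 2 × m` -/
noncomputable def blockD (B : Fin 2 → Matrix m m ℂ) : Matrix (Fin 2 × m) (Fin 2 × m) ℂ :=
  fun p q => if p.1 = q.1 then B p.1 p.2 q.2 else 0

lemma blockD_mulVec (B : Fin 2 → Matrix m m ℂ) (x : Fin 2 × m → ℂ) (z : Fin 2) (i : m) :
    (blockD B *ᵥ x) (z,i) = (B z *ᵥ fun j => x (z,j)) i := by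
  simp only [Matrix.mulVec, dotProduct, Fintype.sum_prod_type, Fin.sum_univ_two, blockD]
  fin_cases z <;> simp

lemma blockD_quad (B : Fin 2 → Matrix m m ℂ) (x : Fin 2 × m → ℂ) :
    star x ⬝ᵥ (blockD B *ᵥ x)
      = (star fun j => x (0,j)) ⬝ᵥ (B 0 *ᵥ fun j => x (0,j))
      + (star fun j => x (1,j)) ⬝ᵥ (B 1 *ᵥ fun j => x (1,j)) := by
  rw [dp_split]
  simp only [blockD_mulVec]
  rfl

lemma blockD_psd [DecidableEq m] (B : Fin 2 → Matrix m m ℂ) (h : ∀ z, (B z).PosSemidef) :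
    (blockD B).PosSemidef := by
  refine Matrix.PosSemidef.of_dotProduct_mulVec_nonneg ?_ ?_
  · ext ⟨z,i⟩ ⟨z',j⟩
    simp only [Matrix.conjTranspose_apply, blockD]
    rcases eq_or_ne z z' with hz | hz
    · subst hz
      rw [if_pos rfl, if_pos rfl]
      have := congrFun (congrFun (h z).1 i) j
      simpa [Matrix.conjTranspose_apply] using this
    · rw [if_neg (Ne.symm hz), if_neg hz, star_zero]
  · intro x
    rw [blockD_quad]
    exact add_nonneg ((h 0).dotProduct_mulVec_nonneg _) ((h 1).dotProduct_mulVec_nonneg _)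

lemma one_sub_blockD (B : Fin 2 → Matrix m m ℂ) [DecidableEq m]
    (hB : ∀ z, B z + B (z+1) = 1) :
    (1 : Matrix (Fin 2 × m) (Fin 2 × m) ℂ) - blockD B = blockD (fun z => B (z+1)) := by
  ext ⟨z,i⟩ ⟨z',j⟩
  have h1 := congrFun (congrFun (hB z) i) j
  simp only [Matrix.add_apply, Matrix.one_apply] at h1
  simp only [Matrix.sub_apply, blockD, Matrix.one_apply, Prod.mk.injEq]
  rcases eq_or_ne z z' with hz | hz
  · subst hz
    simp only [if_pos rfl, true_and, eq_self_iff_true, if_true]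
    rcases eq_or_ne i j with hij | hij
    · subst hij
      rw [if_pos rfl]; rw [if_pos rfl] at h1; linear_combination -h1
    · rw [if_neg hij]; rw [if_neg hij] at h1; linear_combination -h1
  · simp [hz]

lemma trace_blockD_cq (B : Fin 2 → Matrix m m ℂ) (ψ : Fin 2 × m → ℂ) :
    (blockD B * cqMeasure Ph (outer ψ)).trace
      = ∑ z : Fin 2, (1/2) * ((star (hadComp z ψ)) ⬝ᵥ (B z *ᵥ hadComp z ψ)) := by
  have hmul : ∀ z : Fin 2, ∀ i : m, (blockD B * cqMeasure Ph (outer ψ)) (z,i) (z,i)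
      = ∑ j, B z i j * ((1/2) * (hadComp z ψ j * (starRingEnd ℂ) (hadComp z ψ i))) := by
    intro z i
    rw [Matrix.mul_apply]
    rw [Fintype.sum_prod_type]
    rw [Fin.sum_univ_two]
    have e : ∀ z' : Fin 2, ∀ j, blockD B (z,i) (z',j) * cqMeasure Ph (outer ψ) (z',j) (z,i)
        = (if z = z' then B z i j * ((1/2) * (hadComp z ψ j * (starRingEnd ℂ) (hadComp z ψ i))) else 0) := by
      intro z' j
      rw [cq_apply]
      simp only [blockD]
      rcases eq_or_ne z z' with h | h
      · subst h; simp
      · simp [h, Ne.symm h]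
    fin_cases z <;>
      simp only [e] <;> simp
  rw [Matrix.trace, Fintype.sum_prod_type, Fin.sum_univ_two]
  simp only [Matrix.diag]
  rw [Fin.sum_univ_two]
  rw [Finset.sum_congr rfl (fun i _ => hmul 0 i), Finset.sum_congr rfl (fun i _ => hmul 1 i)]
  simp only [dotProduct, Matrix.mulVec, Pi.star_apply, Finset.mul_sum]
  congr 1 <;>
  · refine Finset.sum_congr rfl fun i _ => Finset.sum_congr rfl fun j _ => ?_
    simp only [RCLike.star_def]
    ring

lemma cq_trace (ψ : Fin 2 × m → ℂ) :
    (cqMeasure Ph (outer ψ)).trace = ((∑ p, ‖ψ p‖^2 : ℝ) : ℂ) := by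
  have h1 : ∀ w : ℂ, ((‖w‖^2 : ℝ) : ℂ) = w * (starRingEnd ℂ) w := by
    intro w
    rw [Complex.mul_conj]
    norm_cast
    rw [← Complex.sq_norm]
  have e : ∀ (z : Fin 2) (i : m), cqMeasure Ph (outer ψ) (z,i) (z,i)
      = (1/2) * (hadComp z ψ i * (starRingEnd ℂ) (hadComp z ψ i)) := by
    intro z i; rw [cq_apply, if_pos rfl]
  calc (cqMeasure Ph (outer ψ)).trace
      = ∑ i : m, ((1/2) * (hadComp 0 ψ i * (starRingEnd ℂ) (hadComp 0 ψ i))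
          + (1/2) * (hadComp 1 ψ i * (starRingEnd ℂ) (hadComp 1 ψ i))) := by
        rw [Matrix.trace, Fintype.sum_prod_type, Fin.sum_univ_two, ← Finset.sum_add_distrib]
        exact Finset.sum_congr rfl fun i _ => by rw [Matrix.diag, Matrix.diag, e 0 i, e 1 i]
    _ = ∑ i : m, (((‖ψ (0,i)‖^2 : ℝ) : ℂ) + ((‖ψ (1,i)‖^2 : ℝ) : ℂ)) := by
        refine Finset.sum_congr rfl fun i _ => ?_
        rw [h1, h1]
        simp only [hadComp, map_add, _root_.map_mul, map_pow, map_neg, RingHom.map_one,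
          Fin.val_zero, Fin.val_one, pow_zero, pow_one]
        ring
    _ = ((∑ p, ‖ψ p‖^2 : ℝ) : ℂ) := by
        rw [Fintype.sum_prod_type, Fin.sum_univ_two]
        push_cast
        rw [← Finset.sum_add_distrib]

lemma cq_herm (ψ : Fin 2 × m → ℂ) : (cqMeasure Ph (outer ψ)).IsHermitian := by
  ext ⟨z,i⟩ ⟨z',j⟩
  rw [Matrix.conjTranspose_apply, cq_apply, cq_apply]
  rcases eq_or_ne z z' with h | h
  · subst h
    rw [if_pos rfl, if_pos rfl]
    simp only [RCLike.star_def, _root_.map_mul, map_div₀, RingHom.map_one, map_ofNat,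
      Complex.conj_conj]
    ring
  · rw [if_neg (Ne.symm h), if_neg h, star_zero]


lemma expand_quad (T : Matrix m m ℂ) (α β : m → ℂ) (z : Fin 2) :
    (star fun j => α j + (-1:ℂ)^(z:ℕ) * β j) ⬝ᵥ (T *ᵥ fun j => α j + (-1:ℂ)^(z:ℕ) * β j)
      = star α ⬝ᵥ (T *ᵥ α) + star β ⬝ᵥ (T *ᵥ β)
        + (-1:ℂ)^(z:ℕ) * (star α ⬝ᵥ (T *ᵥ β)) + (-1:ℂ)^(z:ℕ) * (star β ⬝ᵥ (T *ᵥ α)) := by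
  have hsmul : (fun j => α j + (-1:ℂ)^(z:ℕ) * β j) = α + ((-1:ℂ)^(z:ℕ)) • β := rfl
  rw [hsmul, star_add, star_smul]
  simp only [Matrix.mulVec_add, Matrix.mulVec_smul, dotProduct_add, add_dotProduct,
    dotProduct_smul, smul_dotProduct]
  have hc : star ((-1:ℂ)^(z:ℕ)) = (-1:ℂ)^(z:ℕ) := by simp [star_pow]
  rw [hc]
  fin_cases z <;> · simp [smul_eq_mul]; ring

lemma dp_self_re (u : m → ℂ) : (star u ⬝ᵥ u).re = ∑ i, ‖u i‖^2 := by
  rw [dotProduct, Complex.re_sum]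
  refine Finset.sum_congr rfl fun i _ => ?_
  have h : (star u) i * u i = ((‖u i‖^2 : ℝ) : ℂ) := by
    simp only [Pi.star_apply, RCLike.star_def]
    rw [mul_comm, Complex.mul_conj]
    norm_cast
    rw [← Complex.sq_norm]
  rw [h, Complex.ofReal_re]

lemma cross_bound {K0 K1 : Matrix m m ℂ} (h0 : K0.PosSemidef) (h1 : K1.PosSemidef)
    (x y : m → ℂ) :
    ‖star x ⬝ᵥ ((K0 + K1) *ᵥ y)‖ ≤
      Real.sqrt ((star x ⬝ᵥ (K0 *ᵥ x)).re) * Real.sqrt ((star y ⬝ᵥ (K0 *ᵥ y)).re)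
      + Real.sqrt ((star x ⬝ᵥ (K1 *ᵥ x)).re) * Real.sqrt ((star y ⬝ᵥ (K1 *ᵥ y)).re) := by
  rw [Matrix.add_mulVec, dotProduct_add]
  exact le_trans (norm_add_le _ _) (add_le_add (psd_cs h0 x y) (psd_cs h1 x y))

lemma half_re (w : ℂ) : ((1/2 : ℂ) * w).re = w.re / 2 := by
  simp [Complex.mul_re]
  ring


end Blocks

/-! ### Numeric lemmas -/

lemma binEnt_eq (x : ℝ) : binEnt x = Real.binEntropy x / Real.log 2 := by
  unfold binEnt Real.binEntropy Real.logb
  rw [Real.log_inv, Real.log_inv]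
  ring

lemma log_ge_one_sub_inv {x : ℝ} (hx : 0 < x) : 1 - 1/x ≤ Real.log x := by
  have h := Real.log_le_sub_one_of_pos (show (0:ℝ) < 1/x by positivity)
  rw [one_div, Real.log_inv] at h
  have hxx : 1/x = x⁻¹ := one_div x
  rw [hxx]
  linarith

lemma log5_lb : 1.5862942 ≤ Real.log 5 := by
  have h4 : Real.log 4 = 2 * Real.log 2 := by
    rw [show (4:ℝ) = 2^2 by norm_num, Real.log_pow]
    push_cast; ring
  have h54 : (1/5 : ℝ) ≤ Real.log (5/4) := by
    have := log_ge_one_sub_inv (show (0:ℝ) < 5/4 by norm_num)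
    norm_num at this ⊢
    linarith
  have hmul : Real.log 5 = Real.log 4 + Real.log (5/4) := by
    rw [← Real.log_mul (by norm_num) (by norm_num)]
    norm_num
  have h2 := Real.log_two_gt_d9
  rw [hmul, h4]
  norm_num at h54 ⊢
  linarith

lemma log7_lb : 1.8148 ≤ Real.log 7 := by
  have h4 : Real.log 4 = 2 * Real.log 2 := by
    rw [show (4:ℝ) = 2^2 by norm_num, Real.log_pow]
    push_cast; ring
  have h74 : (3/7 : ℝ) ≤ Real.log (7/4) := by
    have := log_ge_one_sub_inv (show (0:ℝ) < 7/4 by norm_num)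
    norm_num at this ⊢
    linarith
  have hmul : Real.log 7 = Real.log 4 + Real.log (7/4) := by
    rw [← Real.log_mul (by norm_num) (by norm_num)]
    norm_num
  have h2 := Real.log_two_gt_d9
  rw [hmul, h4]
  linarith

lemma binEntropy_lb {p Lp : ℝ} (hp0 : 0 < p) (hp1 : p < 1) (hL : Lp ≤ Real.log p⁻¹) :
    p * Lp + (1-p) * p ≤ Real.binEntropy p := by
  rw [Real.binEntropy]
  have h2 : p ≤ Real.log (1-p)⁻¹ := by
    have hp1' : (0:ℝ) < 1 - p := by linarith
    have h := log_ge_one_sub_inv (show (0:ℝ) < (1-p)⁻¹ by positivity)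
    have : 1 - 1/(1-p)⁻¹ = p := by
      rw [one_div, inv_inv]; ring
    rw [this] at h
    exact h
  have t1 : p * Lp ≤ p * Real.log p⁻¹ := by nlinarith
  have t2 : (1-p) * p ≤ (1-p) * Real.log (1-p)⁻¹ := by nlinarith
  linarith

lemma bE04 : 0.165 ≤ Real.binEntropy 0.04 := by
  have hL : (3.1725884 : ℝ) ≤ Real.log (0.04:ℝ)⁻¹ := by
    have h25 : ((0.04:ℝ)⁻¹ : ℝ) = 25 := by norm_num
    have : Real.log 25 = 2 * Real.log 5 := by
      rw [show (25:ℝ) = 5^2 by norm_num, Real.log_pow]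
      push_cast; ring
    rw [h25, this]
    have := log5_lb
    linarith
  have := binEntropy_lb (show (0:ℝ) < 0.04 by norm_num) (by norm_num) hL
  norm_num at this ⊢
  linarith

lemma bE07 : 0.24 ≤ Real.binEntropy 0.07 := by
  have hL : (2.5079 : ℝ) ≤ Real.log (0.07:ℝ)⁻¹ := by
    have h14 : Real.log 14 ≤ Real.log (0.07:ℝ)⁻¹ := by
      apply Real.log_le_log (by norm_num)
      norm_num
    have h14' : Real.log 14 = Real.log 2 + Real.log 7 := by
      rw [← Real.log_mul (by norm_num) (by norm_num)]
      norm_num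
    have h2 := Real.log_two_gt_d9
    have h7 := log7_lb
    rw [h14'] at h14
    linarith
  have := binEntropy_lb (show (0:ℝ) < 0.07 by norm_num) (by norm_num) hL
  norm_num at this ⊢
  linarith

lemma bE095 : 0.3025 ≤ Real.binEntropy 0.095 := by
  have hL : (2.2794 : ℝ) ≤ Real.log (0.095:ℝ)⁻¹ := by
    have h10 : Real.log 10 ≤ Real.log (0.095:ℝ)⁻¹ := by
      apply Real.log_le_log (by norm_num)
      norm_num
    have h10' : Real.log 10 = Real.log 2 + Real.log 5 := by
      rw [← Real.log_mul (by norm_num) (by norm_num)]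
      norm_num
    have h2 := Real.log_two_gt_d9
    have h5 := log5_lb
    rw [h10'] at h10
    linarith
  have := binEntropy_lb (show (0:ℝ) < 0.095 by norm_num) (by norm_num) hL
  norm_num at this ⊢
  linarith

lemma binEntropy_mono {a b : ℝ} (h0 : 0 ≤ a) (hab : a ≤ b) (hb : b ≤ 2⁻¹) :
    Real.binEntropy a ≤ Real.binEntropy b :=
  Real.binEntropy_strictMonoOn.monotoneOn ⟨h0, by linarith⟩ ⟨by linarith, hb⟩ hab

lemma cs4 {a b c d e f g h : ℝ} (ha : 0 ≤ a) (hb : 0 ≤ b) (hc : 0 ≤ c) (hd : 0 ≤ d)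
    (he : 0 ≤ e) (hf : 0 ≤ f) (hg : 0 ≤ g) (hh : 0 ≤ h) :
    a*e + b*f + c*g + d*h ≤ Real.sqrt ((a^2+b^2+c^2+d^2) * (e^2+f^2+g^2+h^2)) := by
  have hsq : (a*e+b*f+c*g+d*h)^2 ≤ (a^2+b^2+c^2+d^2)*(e^2+f^2+g^2+h^2) := by
    nlinarith [sq_nonneg (a*f-b*e), sq_nonneg (a*g-c*e), sq_nonneg (a*h-d*e),
      sq_nonneg (b*g-c*f), sq_nonneg (b*h-d*f), sq_nonneg (c*h-d*g)]
  have h0 : 0 ≤ a*e+b*f+c*g+d*h := by positivity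
  calc a*e+b*f+c*g+d*h = Real.sqrt ((a*e+b*f+c*g+d*h)^2) := (Real.sqrt_sq h0).symm
    _ ≤ Real.sqrt ((a^2+b^2+c^2+d^2) * (e^2+f^2+g^2+h^2)) := Real.sqrt_le_sqrt hsq


set_option maxHeartbeats 2000000 in
lemma abstract_bound {ε Δ xA00 xA01 xA10 xA11 xB00 xB01 xB10 xB11 A0 A1 B0 B1 P0 P1 s0 s1 : ℝ}
    (nA00 : 0 ≤ xA00) (nA01 : 0 ≤ xA01) (nA10 : 0 ≤ xA10) (nA11 : 0 ≤ xA11)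
    (nB00 : 0 ≤ xB00) (nB01 : 0 ≤ xB01) (nB10 : 0 ≤ xB10) (nB11 : 0 ≤ xB11)
    (hA0 : A0 = xA00 + xA01) (hA1 : A1 = xA10 + xA11)
    (hB0 : B0 = xB00 + xB01) (hB1 : B1 = xB10 + xB11)
    (hP0 : P0 = A0 + A1) (hP1 : P1 = B0 + B1) (hP : P0 + P1 = 1)
    (hg : 1 - ε ≤ A0 + B1)
    (hs0 : s0 ≤ 1/2 + (Real.sqrt xA00 * Real.sqrt xB00 + Real.sqrt xA01 * Real.sqrt xB01
        + Real.sqrt xA10 * Real.sqrt xB10 + Real.sqrt xA11 * Real.sqrt xB11))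
    (hs1 : 1 - ε ≤ s1)
    (hΔs : s1 - s0 ≤ Δ)
    (hε : ε < 0.11) :
    (1 - 2 * binEnt ε ≤ 4 * Δ + (1 + Δ) * binEnt (Δ / (1 + Δ))) ∧ 0 < Δ := by
  -- the cross term bound
  have hS : Real.sqrt xA00 * Real.sqrt xB00 + Real.sqrt xA01 * Real.sqrt xB01
      + Real.sqrt xA10 * Real.sqrt xB10 + Real.sqrt xA11 * Real.sqrt xB11
      ≤ Real.sqrt ((A0 + B1) * (A1 + B0)) := by
    have h4 := cs4 (Real.sqrt_nonneg xA00) (Real.sqrt_nonneg xA01)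
      (Real.sqrt_nonneg xB10) (Real.sqrt_nonneg xB11) (Real.sqrt_nonneg xB00)
      (Real.sqrt_nonneg xB01) (Real.sqrt_nonneg xA10) (Real.sqrt_nonneg xA11)
    have e1 : Real.sqrt xA00 ^2 + Real.sqrt xA01 ^2 + Real.sqrt xB10 ^2 + Real.sqrt xB11 ^2
        = A0 + B1 := by
      rw [Real.sq_sqrt nA00, Real.sq_sqrt nA01, Real.sq_sqrt nB10, Real.sq_sqrt nB11]
      rw [hA0, hB1]; ring
    have e2 : Real.sqrt xB00 ^2 + Real.sqrt xB01 ^2 + Real.sqrt xA10 ^2 + Real.sqrt xA11 ^2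
        = B0 + A1 := by
      rw [Real.sq_sqrt nB00, Real.sq_sqrt nB01, Real.sq_sqrt nA10, Real.sq_sqrt nA11]
      rw [hB0, hA1]; ring
    rw [e1, e2] at h4
    calc Real.sqrt xA00 * Real.sqrt xB00 + Real.sqrt xA01 * Real.sqrt xB01
        + Real.sqrt xA10 * Real.sqrt xB10 + Real.sqrt xA11 * Real.sqrt xB11
        = Real.sqrt xA00 * Real.sqrt xB00 + Real.sqrt xA01 * Real.sqrt xB01
        + Real.sqrt xB10 * Real.sqrt xA10 + Real.sqrt xB11 * Real.sqrt xA11 := by ring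
      _ ≤ Real.sqrt ((A0 + B1) * (B0 + A1)) := h4
      _ = Real.sqrt ((A0 + B1) * (A1 + B0)) := by rw [add_comm B0 A1]
  -- basic positivity facts
  set t := A1 + B0 with ht
  have ht0 : 0 ≤ t := by rw [ht, hA1, hB0]; positivity
  have hup : A0 + B1 + t = 1 := by rw [ht]; rw [hP0, hP1] at hP; linarith
  have hε0 : 0 ≤ ε := by linarith
  have htε : t ≤ ε := by linarith
  set r := Real.sqrt (ε * (1 - ε)) with hr
  have hεε : 0 ≤ ε * (1 - ε) := mul_nonneg hε0 (by linarith)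
  have hr0 : 0 ≤ r := Real.sqrt_nonneg _
  have hr2 : r^2 = ε * (1 - ε) := Real.sq_sqrt hεε
  have hrt : Real.sqrt ((A0 + B1) * (A1 + B0)) ≤ r := by
    rw [hr]
    apply Real.sqrt_le_sqrt
    have h1 : A0 + B1 = 1 - t := by linarith
    rw [h1, ← ht]
    nlinarith [mul_nonneg (show (0:ℝ) ≤ ε - t by linarith) (show (0:ℝ) ≤ 1 - t - ε by linarith)]
  have hs0' : s0 ≤ 1/2 + r := by linarith
  have hΔlb : 1/2 - ε - r ≤ Δ := by linarith
  -- Δ is positive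
  have hrlt : r < 1/2 - ε := by
    clear hS hs0 hs1 hΔs hg hs0' hΔlb hup
    by_contra hcon
    push_neg at hcon
    nlinarith [pow_le_pow_left₀ (show (0:ℝ) ≤ 1/2 - ε by linarith) hcon 2, hr2,
      sq_nonneg (ε - 0.11)]
  have hΔpos : 0 < Δ := by linarith
  refine ⟨?_, hΔpos⟩
  -- the entropy bound
  have hbe : 0 ≤ (1 + Δ) * binEnt (Δ / (1 + Δ)) := by
    have h1 : 0 ≤ Δ / (1 + Δ) := by positivity
    have h2 : Δ / (1 + Δ) ≤ 1 := by
      rw [div_le_one (by linarith)]; linarith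
    have h3 := Real.binEntropy_nonneg h1 h2
    have hl2 : 0 < Real.log 2 := Real.log_pos (by norm_num)
    rw [binEnt_eq]
    positivity
  have hl2a : 0.6931471 < Real.log 2 := by have := Real.log_two_gt_d9; linarith
  have hl2b : Real.log 2 < 0.6931472 := by have := Real.log_two_lt_d9; linarith
  have hl2pos : 0 < Real.log 2 := by linarith
  have sqrt_bd : ∀ c : ℝ, 0 ≤ c → ε * (1-ε) ≤ c^2 → r ≤ c := by
    intro c hc hcc
    calc r ≤ Real.sqrt (c^2) := Real.sqrt_le_sqrt hcc
      _ = c := Real.sqrt_sq hc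
  suffices h : 4*ε + 4*r - 1 ≤ 2 * binEnt ε by linarith
  rcases le_or_gt ε 0.04 with h1 | h1
  · have hrb : r ≤ 0.2 := sqrt_bd 0.2 (by norm_num) (by nlinarith)
    have hbnn : 0 ≤ binEnt ε := by
      rw [binEnt_eq]
      exact div_nonneg (Real.binEntropy_nonneg hε0 (by linarith)) hl2pos.le
    linarith
  rcases le_or_gt ε 0.07 with h2 | h2
  · have hrb : r ≤ 0.2552 := sqrt_bd 0.2552 (by norm_num) (by nlinarith)
    have hmono : Real.binEntropy 0.04 ≤ Real.binEntropy ε :=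
      binEntropy_mono (by norm_num) h1.le (by norm_num; linarith)
    have hb : (0.165:ℝ) ≤ Real.binEntropy ε := le_trans bE04 hmono
    have hq : (0.165:ℝ)/0.6931472 ≤ binEnt ε := by
      rw [binEnt_eq]
      apply div_le_div₀ (by linarith) hb hl2pos (by linarith)
    have hnum : (0.238:ℝ) ≤ 0.165/0.6931472 := by norm_num
    linarith
  rcases le_or_gt ε 0.095 with h3 | h3
  · have hrb : r ≤ 0.2933 := sqrt_bd 0.2933 (by norm_num) (by nlinarith)
    have hmono : Real.binEntropy 0.07 ≤ Real.binEntropy ε :=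
      binEntropy_mono (by norm_num) h2.le (by norm_num; linarith)
    have hb : (0.24:ℝ) ≤ Real.binEntropy ε := le_trans bE07 hmono
    have hq : (0.24:ℝ)/0.6931472 ≤ binEnt ε := by
      rw [binEnt_eq]
      apply div_le_div₀ (by linarith) hb hl2pos (by linarith)
    have hnum : (0.346:ℝ) ≤ 0.24/0.6931472 := by norm_num
    linarith
  · have hrb : r ≤ 0.313 := sqrt_bd 0.313 (by norm_num) (by nlinarith)
    have hmono : Real.binEntropy 0.095 ≤ Real.binEntropy ε :=
      binEntropy_mono (by norm_num) h3.le (by norm_num; linarith)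
    have hb : (0.3025:ℝ) ≤ Real.binEntropy ε := le_trans bE095 hmono
    have hq : (0.3025:ℝ)/0.6931472 ≤ binEnt ε := by
      rw [binEnt_eq]
      apply div_le_div₀ (by linarith) hb hl2pos (by linarith)
    have hnum : (0.436:ℝ) ≤ 0.3025/0.6931472 := by norm_num
    linarith

end AuxLemmas


set_option maxHeartbeats 2000000 in
open Matrix Kronecker in
/-- for `ψ⁰ ∈ S₀^ε`, `ψ¹ ∈ S₁^ε` with `ε < 0.11`, the trace distance `Δ` of
the Hadamard-measured states satisfies `1 - 2h(ε) ≤ 4Δ + (1+Δ)h(Δ/(1+Δ))`; in particular `Δ > 0`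
and `ψ⁰ ≠ ψ¹`. -/
theorem hadamard_traceDist_lower (dM dM' : ℕ) (ε : ℝ) (hε : ε < 0.11)
    (ψ0 ψ1 : Fin 2 × Fin dM × Fin dM' → ℂ)
    (h0 : ψ0 ∈ predSet Pc ε) (h1 : ψ1 ∈ predSet Ph ε) (Δ : ℝ)
    (hΔ : Δ = (1 / 2) * traceNorm (cqMeasure Ph (outer ψ0) - cqMeasure Ph (outer ψ1))) :
    1 - 2 * binEnt ε ≤ 4 * Δ + (1 + Δ) * binEnt (Δ / (1 + Δ)) ∧ 0 < Δ ∧ ψ0 ≠ ψ1 := by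
  classical
  obtain ⟨hN0, ⟨Λ, hΛpsd, hΛsum, hΛg⟩, -⟩ := h0
  obtain ⟨hN1, -, ⟨Λ', hΛ'psd, hΛ'sum, hΛ'g⟩⟩ := h1
  -- vector components of ψ0
  set av : Fin dM × Fin dM' → ℂ := fun j => ψ0 (0, j) with hav
  set bv : Fin dM × Fin dM' → ℂ := fun j => ψ0 (1, j) with hbv
  -- operator sums
  have hKL : ∀ b : Fin 2, (Λ b ⊗ₖ Λ' 0) + (Λ b ⊗ₖ Λ' 1)
      = Λ b ⊗ₖ (1 : Matrix (Fin dM') (Fin dM') ℂ) := by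
    intro b; rw [← Matrix.kronecker_add, hΛ'sum]
  have hKT : ∀ z : Fin 2, (Λ 0 ⊗ₖ Λ' z) + (Λ 1 ⊗ₖ Λ' z)
      = (1 : Matrix (Fin dM) (Fin dM) ℂ) ⊗ₖ Λ' z := by
    intro z; rw [← Matrix.add_kronecker, hΛsum]
  have hLsum : (Λ 0 ⊗ₖ (1 : Matrix (Fin dM') (Fin dM') ℂ))
      + (Λ 1 ⊗ₖ (1 : Matrix (Fin dM') (Fin dM') ℂ)) = 1 := by
    rw [← Matrix.add_kronecker, hΛsum, Matrix.one_kronecker_one]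
  have hTsum : ((1 : Matrix (Fin dM) (Fin dM) ℂ) ⊗ₖ Λ' 0)
      + ((1 : Matrix (Fin dM) (Fin dM) ℂ) ⊗ₖ Λ' 1) = 1 := by
    rw [← Matrix.kronecker_add, hΛ'sum, Matrix.one_kronecker_one]
  -- positivity
  have hKpsd : ∀ b z : Fin 2, (Λ b ⊗ₖ Λ' z).PosSemidef :=
    fun b z => kron_psd (hΛpsd b) (hΛ'psd z)
  have hLpsd : ∀ b : Fin 2, (Λ b ⊗ₖ (1 : Matrix (Fin dM') (Fin dM') ℂ)).PosSemidef :=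
    fun b => kron_psd (hΛpsd b) Matrix.PosSemidef.one
  have hTpsd : ∀ z : Fin 2, ((1 : Matrix (Fin dM) (Fin dM) ℂ) ⊗ₖ Λ' z).PosSemidef :=
    fun z => kron_psd Matrix.PosSemidef.one (hΛ'psd z)
  -- guessProb computations
  have hgen : ∀ (O : Fin 2 → Matrix (Fin dM × Fin dM') (Fin dM × Fin dM') ℂ)
      (ψ : Fin 2 × Fin dM × Fin dM' → ℂ),
      guessProb Pc O ψ
        = ((star fun j => ψ (0, j)) ⬝ᵥ (O 0 *ᵥ fun j => ψ (0, j))).re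
        + ((star fun j => ψ (1, j)) ⬝ᵥ (O 1 *ᵥ fun j => ψ (1, j))).re := by
    intro O ψ
    unfold guessProb
    rw [Fin.sum_univ_two, trace_mul_outer, trace_mul_outer, quadPc, quadPc, Complex.add_re]
  have hgenPh : ∀ (O : Fin 2 → Matrix (Fin dM × Fin dM') (Fin dM × Fin dM') ℂ)
      (ψ : Fin 2 × Fin dM × Fin dM' → ℂ),
      guessProb Ph O ψ
        = (∑ z : Fin 2, (1/2) * ((star (hadComp z ψ)) ⬝ᵥ (O z *ᵥ hadComp z ψ))).re := by
    intro O ψ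
    unfold guessProb
    rw [Fin.sum_univ_two, Fin.sum_univ_two, trace_mul_outer, trace_mul_outer, quadPh, quadPh]
    rfl
  -- the measured states and the distinguishing operator
  set T : Fin 2 → Matrix (Fin dM × Fin dM') (Fin dM × Fin dM') ℂ :=
    fun b => (1 : Matrix (Fin dM) (Fin dM) ℂ) ⊗ₖ Λ' b with hT
  have hs_eq : ∀ ψ : Fin 2 × Fin dM × Fin dM' → ℂ,
      ((blockD T * cqMeasure Ph (outer ψ)).trace).re = guessProb Ph T ψ := by
    intro ψ
    rw [trace_blockD_cq, hgenPh]
  -- trace-norm bound : s1 - s0 ≤ Δ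
  set τ0 := cqMeasure Ph (outer ψ0) with hτ0
  set τ1 := cqMeasure Ph (outer ψ1) with hτ1
  set s0 : ℝ := ((blockD T * τ0).trace).re with hs0def
  set s1 : ℝ := ((blockD T * τ1).trace).re with hs1def
  have hTcompl : ∀ z : Fin 2, T z + T (z+1) = 1 := by
    intro z
    fin_cases z
    · exact hTsum
    · show T 1 + T 0 = 1
      rw [add_comm]; exact hTsum
  have hAherm : (τ0 - τ1).IsHermitian := (cq_herm ψ0).sub (cq_herm ψ1)
  have hAtr : (τ0 - τ1).trace = 0 := by
    rw [Matrix.trace_sub, hτ0, hτ1, cq_trace, cq_trace, hN0, hN1, sub_self]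
  have hDpsd : ((1 : Matrix (Fin 2 × (Fin dM × Fin dM')) (Fin 2 × (Fin dM × Fin dM')) ℂ)
      - blockD T).PosSemidef := by
    rw [one_sub_blockD T hTcompl]
    exact blockD_psd _ (fun z => hTpsd (z+1))
  have hDpsd' : ((1 : Matrix (Fin 2 × (Fin dM × Fin dM')) (Fin 2 × (Fin dM × Fin dM')) ℂ)
      - ((1 : Matrix (Fin 2 × (Fin dM × Fin dM')) (Fin 2 × (Fin dM × Fin dM')) ℂ)
        - blockD T)).PosSemidef := by
    rw [sub_sub_cancel]
    exact blockD_psd _ hTpsd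
  have htn := tn_bound hAherm hAtr hDpsd hDpsd'
  have hΔbound : s1 - s0 ≤ Δ := by
    have e1 : ((1 - blockD T) * (τ0 - τ1)) = (τ0 - τ1) - (blockD T * τ0 - blockD T * τ1) := by
      rw [Matrix.sub_mul, Matrix.one_mul, Matrix.mul_sub]
    rw [e1, Matrix.trace_sub] at htn
    rw [hAtr, Matrix.trace_sub] at htn
    have e2 : ((0 : ℂ) - ((blockD T * τ0).trace - (blockD T * τ1).trace)).re = s1 - s0 := by
      rw [hs0def, hs1def]
      simp [Complex.sub_re]
    rw [e2] at htn
    rw [hΔ]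
    exact htn
  -- s1 is large
  have hs1ge : 1 - ε ≤ s1 := by
    rw [hs1def, hs_eq ψ1]
    exact hΛ'g
  -- s0 is small: expansion
  have hs0exp : (blockD T * τ0).trace
      = (1/2) * ((star av ⬝ᵥ (T 0 *ᵥ av)) + (star bv ⬝ᵥ (T 0 *ᵥ bv))
          + (star av ⬝ᵥ (T 0 *ᵥ bv)) + (star bv ⬝ᵥ (T 0 *ᵥ av)))
      + (1/2) * ((star av ⬝ᵥ (T 1 *ᵥ av)) + (star bv ⬝ᵥ (T 1 *ᵥ bv))
          - (star av ⬝ᵥ (T 1 *ᵥ bv)) - (star bv ⬝ᵥ (T 1 *ᵥ av))) := by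
    rw [hτ0, trace_blockD_cq, Fin.sum_univ_two]
    have e0 : hadComp 0 ψ0 = fun j => av j + (-1:ℂ)^((0:Fin 2):ℕ) * bv j := rfl
    have e1 : hadComp 1 ψ0 = fun j => av j + (-1:ℂ)^((1:Fin 2):ℕ) * bv j := rfl
    rw [e0, e1, expand_quad, expand_quad]
    norm_num
    ring
  -- real scalar quantities
  set xA00 : ℝ := ((star av) ⬝ᵥ ((Λ 0 ⊗ₖ Λ' 0) *ᵥ av)).re with hxA00
  set xA01 : ℝ := ((star av) ⬝ᵥ ((Λ 0 ⊗ₖ Λ' 1) *ᵥ av)).re with hxA01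
  set xA10 : ℝ := ((star av) ⬝ᵥ ((Λ 1 ⊗ₖ Λ' 0) *ᵥ av)).re with hxA10
  set xA11 : ℝ := ((star av) ⬝ᵥ ((Λ 1 ⊗ₖ Λ' 1) *ᵥ av)).re with hxA11
  set xB00 : ℝ := ((star bv) ⬝ᵥ ((Λ 0 ⊗ₖ Λ' 0) *ᵥ bv)).re with hxB00
  set xB01 : ℝ := ((star bv) ⬝ᵥ ((Λ 0 ⊗ₖ Λ' 1) *ᵥ bv)).re with hxB01
  set xB10 : ℝ := ((star bv) ⬝ᵥ ((Λ 1 ⊗ₖ Λ' 0) *ᵥ bv)).re with hxB10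
  set xB11 : ℝ := ((star bv) ⬝ᵥ ((Λ 1 ⊗ₖ Λ' 1) *ᵥ bv)).re with hxB11
  set A0 : ℝ := ((star av) ⬝ᵥ ((Λ 0 ⊗ₖ (1 : Matrix (Fin dM') (Fin dM') ℂ)) *ᵥ av)).re with hA0
  set A1 : ℝ := ((star av) ⬝ᵥ ((Λ 1 ⊗ₖ (1 : Matrix (Fin dM') (Fin dM') ℂ)) *ᵥ av)).re with hA1
  set B0 : ℝ := ((star bv) ⬝ᵥ ((Λ 0 ⊗ₖ (1 : Matrix (Fin dM') (Fin dM') ℂ)) *ᵥ bv)).re with hB0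
  set B1 : ℝ := ((star bv) ⬝ᵥ ((Λ 1 ⊗ₖ (1 : Matrix (Fin dM') (Fin dM') ℂ)) *ᵥ bv)).re with hB1
  set P0 : ℝ := ((star av) ⬝ᵥ av).re with hP0
  set P1 : ℝ := ((star bv) ⬝ᵥ bv).re with hP1
  -- nonnegativity
  have nxA00 : 0 ≤ xA00 := (hKpsd 0 0).re_dotProduct_nonneg av
  have nxA01 : 0 ≤ xA01 := (hKpsd 0 1).re_dotProduct_nonneg av
  have nxA10 : 0 ≤ xA10 := (hKpsd 1 0).re_dotProduct_nonneg av
  have nxA11 : 0 ≤ xA11 := (hKpsd 1 1).re_dotProduct_nonneg av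
  have nxB00 : 0 ≤ xB00 := (hKpsd 0 0).re_dotProduct_nonneg bv
  have nxB01 : 0 ≤ xB01 := (hKpsd 0 1).re_dotProduct_nonneg bv
  have nxB10 : 0 ≤ xB10 := (hKpsd 1 0).re_dotProduct_nonneg bv
  have nxB11 : 0 ≤ xB11 := (hKpsd 1 1).re_dotProduct_nonneg bv
  -- additivity relations
  have hA0eq : A0 = xA00 + xA01 := by
    rw [hA0, hxA00, hxA01, ← Complex.add_re, ← dotProduct_add, ← Matrix.add_mulVec, hKL 0]
  have hA1eq : A1 = xA10 + xA11 := by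
    rw [hA1, hxA10, hxA11, ← Complex.add_re, ← dotProduct_add, ← Matrix.add_mulVec, hKL 1]
  have hB0eq : B0 = xB00 + xB01 := by
    rw [hB0, hxB00, hxB01, ← Complex.add_re, ← dotProduct_add, ← Matrix.add_mulVec, hKL 0]
  have hB1eq : B1 = xB10 + xB11 := by
    rw [hB1, hxB10, hxB11, ← Complex.add_re, ← dotProduct_add, ← Matrix.add_mulVec, hKL 1]
  have hP0eq : P0 = A0 + A1 := by
    rw [hP0, hA0, hA1, ← Complex.add_re, ← dotProduct_add, ← Matrix.add_mulVec, hLsum,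
      Matrix.one_mulVec]
  have hP1eq : P1 = B0 + B1 := by
    rw [hP1, hB0, hB1, ← Complex.add_re, ← dotProduct_add, ← Matrix.add_mulVec, hLsum,
      Matrix.one_mulVec]
  have hPsum : P0 + P1 = 1 := by
    have e0 : P0 = ∑ i, ‖ψ0 (0, i)‖^2 := dp_self_re av
    have e1 : P1 = ∑ i, ‖ψ0 (1, i)‖^2 := dp_self_re bv
    have h := hN0
    rw [Fintype.sum_prod_type, Fin.sum_univ_two] at h
    rw [e0, e1]
    exact h
  -- the guessing hypothesis for ψ0
  have hgPc : 1 - ε ≤ A0 + B1 := by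
    calc 1 - ε ≤ guessProb Pc (fun b => Λ b ⊗ₖ (1 : Matrix (Fin dM') (Fin dM') ℂ)) ψ0 := hΛg
      _ = A0 + B1 := by rw [hgen]
  -- cross-term bounds
  have hcT0 : T 0 = (Λ 0 ⊗ₖ Λ' 0) + (Λ 1 ⊗ₖ Λ' 0) := (hKT 0).symm
  have hcT1 : T 1 = (Λ 0 ⊗ₖ Λ' 1) + (Λ 1 ⊗ₖ Λ' 1) := (hKT 1).symm
  have hc0 : ‖star av ⬝ᵥ (T 0 *ᵥ bv)‖
      ≤ Real.sqrt xA00 * Real.sqrt xB00 + Real.sqrt xA10 * Real.sqrt xB10 := by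
    rw [hcT0]; exact cross_bound (hKpsd 0 0) (hKpsd 1 0) av bv
  have hc1 : ‖star av ⬝ᵥ (T 1 *ᵥ bv)‖
      ≤ Real.sqrt xA01 * Real.sqrt xB01 + Real.sqrt xA11 * Real.sqrt xB11 := by
    rw [hcT1]; exact cross_bound (hKpsd 0 1) (hKpsd 1 1) av bv
  have hc0' : ‖star bv ⬝ᵥ (T 0 *ᵥ av)‖
      ≤ Real.sqrt xB00 * Real.sqrt xA00 + Real.sqrt xB10 * Real.sqrt xA10 := by
    rw [hcT0]; exact cross_bound (hKpsd 0 0) (hKpsd 1 0) bv av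
  have hc1' : ‖star bv ⬝ᵥ (T 1 *ᵥ av)‖
      ≤ Real.sqrt xB01 * Real.sqrt xA01 + Real.sqrt xB11 * Real.sqrt xA11 := by
    rw [hcT1]; exact cross_bound (hKpsd 0 1) (hKpsd 1 1) bv av
  -- diagonal sums
  have hTaa : (star av ⬝ᵥ (T 0 *ᵥ av)).re + (star av ⬝ᵥ (T 1 *ᵥ av)).re = P0 := by
    rw [← Complex.add_re, ← dotProduct_add, ← Matrix.add_mulVec, hT]
    rw [show ((fun b => (1 : Matrix (Fin dM) (Fin dM) ℂ) ⊗ₖ Λ' b) 0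
        + (fun b => (1 : Matrix (Fin dM) (Fin dM) ℂ) ⊗ₖ Λ' b) 1 :
        Matrix (Fin dM × Fin dM') (Fin dM × Fin dM') ℂ) = 1 from hTsum]
    rw [Matrix.one_mulVec, hP0]
  have hTbb : (star bv ⬝ᵥ (T 0 *ᵥ bv)).re + (star bv ⬝ᵥ (T 1 *ᵥ bv)).re = P1 := by
    rw [← Complex.add_re, ← dotProduct_add, ← Matrix.add_mulVec, hT]
    rw [show ((fun b => (1 : Matrix (Fin dM) (Fin dM) ℂ) ⊗ₖ Λ' b) 0
        + (fun b => (1 : Matrix (Fin dM) (Fin dM) ℂ) ⊗ₖ Λ' b) 1 :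
        Matrix (Fin dM × Fin dM') (Fin dM × Fin dM') ℂ) = 1 from hTsum]
    rw [Matrix.one_mulVec, hP1]
  -- assemble bound on s0
  have hs0le : s0 ≤ 1/2 + (Real.sqrt xA00 * Real.sqrt xB00 + Real.sqrt xA01 * Real.sqrt xB01
      + Real.sqrt xA10 * Real.sqrt xB10 + Real.sqrt xA11 * Real.sqrt xB11) := by
    have hre : s0 = ((star av ⬝ᵥ (T 0 *ᵥ av)).re + (star bv ⬝ᵥ (T 0 *ᵥ bv)).re
          + (star av ⬝ᵥ (T 0 *ᵥ bv)).re + (star bv ⬝ᵥ (T 0 *ᵥ av)).re) / 2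
        + ((star av ⬝ᵥ (T 1 *ᵥ av)).re + (star bv ⬝ᵥ (T 1 *ᵥ bv)).re
          - (star av ⬝ᵥ (T 1 *ᵥ bv)).re - (star bv ⬝ᵥ (T 1 *ᵥ av)).re) / 2 := by
      rw [hs0def, hs0exp, Complex.add_re, half_re, half_re]
      simp only [Complex.add_re, Complex.sub_re]
    have e1 : (star av ⬝ᵥ (T 0 *ᵥ bv)).re ≤ ‖star av ⬝ᵥ (T 0 *ᵥ bv)‖ := by
      exact Complex.re_le_norm _
    have e2 : (star bv ⬝ᵥ (T 0 *ᵥ av)).re ≤ ‖star bv ⬝ᵥ (T 0 *ᵥ av)‖ := by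
      exact Complex.re_le_norm _
    have e3 : -(star av ⬝ᵥ (T 1 *ᵥ bv)).re ≤ ‖star av ⬝ᵥ (T 1 *ᵥ bv)‖ := by
      have : |(star av ⬝ᵥ (T 1 *ᵥ bv)).re| ≤ ‖star av ⬝ᵥ (T 1 *ᵥ bv)‖ := by
        exact Complex.abs_re_le_norm _
      have h2 := neg_abs_le ((star av ⬝ᵥ (T 1 *ᵥ bv)).re)
      linarith [abs_nonneg ((star av ⬝ᵥ (T 1 *ᵥ bv)).re)]
    have e4 : -(star bv ⬝ᵥ (T 1 *ᵥ av)).re ≤ ‖star bv ⬝ᵥ (T 1 *ᵥ av)‖ := by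
      have : |(star bv ⬝ᵥ (T 1 *ᵥ av)).re| ≤ ‖star bv ⬝ᵥ (T 1 *ᵥ av)‖ := by
        exact Complex.abs_re_le_norm _
      have h2 := neg_abs_le ((star bv ⬝ᵥ (T 1 *ᵥ av)).re)
      linarith [abs_nonneg ((star bv ⬝ᵥ (T 1 *ᵥ av)).re)]
    rw [hre]
    have hP : P0 + P1 = 1 := hPsum
    linarith [hc0, hc1, hc0', hc1']
  -- conclude by the abstract bound
  obtain ⟨goal1, hΔpos⟩ := abstract_bound nxA00 nxA01 nxA10 nxA11 nxB00 nxB01 nxB10 nxB11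
    hA0eq hA1eq hB0eq hB1eq hP0eq hP1eq hPsum hgPc hs0le hs1ge hΔbound hε
  refine ⟨goal1, hΔpos, ?_⟩
  intro heq
  have hττ : τ0 = τ1 := by rw [hτ0, hτ1, heq]
  have hΔ0 : Δ = 0 := by
    rw [hΔ, hττ, sub_self, traceNorm_zero, mul_zero]
  rw [hΔ0] at hΔpos
  exact lt_irrefl 0 hΔpos
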